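/- With the composed scheme of Construction 2 (per-message commitments via COM sampled independently, deterministic vector commitment Commit_VC and deterministic Open_VC applied to the list of per-message commitments), for all n ≤ L, all I ⊆ {1,…,n}, all message vectors M_1, M_2 ∈ M^n with (M_1)_I = (M_2)_I, and every key k = (k_1, k_2), the selective-opening views satisfy the refined bound Δ(CD_k(M_1, I), CD_k(M_2, I)) ≤ Σ_{i ∈ {1,…,n} \ I} Δ(C_{k_1}((M_1)_i), C_{k_1}((M_2)_i)), where C_{k_1}(m) denotes the marginal distribution of the commitment component of Commit_COM(k_1, m), and CD_k(M, I) denotes the joint distribution of the vector commitment c together with the openings (c_i, d_i, Open_VC(k_2, D', i)) for all i ∈ I. -/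

import Mathlib

/-!
The hybrid decomposition established inside the proof of Theorem 4: for the
composed scheme of Construction 2, the statistical distance between the two
selective-opening views is bounded by the sum, over the unopened positions,
of the statistical distances between the corresponding per-message commitment
distributions.

Statistical distance of two distributions `A, B` on the same type is
`Δ(A, B) := Σ_x |Pr_A(x) − Pr_B(x)|`.

In Construction 2 (with key `k = (k₁, k₂)`), `(cᵢ, dᵢ) ← Commit_COM(k₁, mᵢ)`
are sampled independently for `i ∈ {1, …, n}`, the vector commitment
`(c, D') = Commit_VC(k₂, [c₁, …, cₙ])` and the openings
`(cᵢ, dᵢ, Open_VC(k₂, D', i))` are computed deterministically.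
`C_{k₁}(m)` is the marginal distribution of the commitment component of
`Commit_COM(k₁, m)`.  `CD_k(M, I)` is the joint distribution of `c` together
with the openings at all positions `i ∈ I`.  Message vectors are 1-indexed:
the `i`-th entry of `M` is `M.getD (i - 1) default`.
-/

/-- Statistical distance `Δ(p, q) = Σ_x |p(x) − q(x)|`. -/
noncomputable def statDist {α : Type} (p q : PMF α) : ℝ :=
  ∑' x, |(p x).toReal - (q x).toReal|

/-- Independent product of a list of distributions. -/
noncomputable def pmfList {α : Type} : List (PMF α) → PMF (List α)
  | [] => PMF.pure []
  | p :: ps => p.bind fun x => (pmfList ps).map fun xs => x :: xs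

open scoped ENNReal

noncomputable def eD {α : Type} (p q : PMF α) : ℝ≥0∞ :=
  ∑' x, ((p x - q x) + (q x - p x))

lemma eD_le_two {α : Type} (p q : PMF α) : eD p q ≤ 2 := by
  calc eD p q ≤ ∑' x, (p x + q x) :=
        ENNReal.tsum_le_tsum fun x => add_le_add tsub_le_self tsub_le_self
    _ = 1 + 1 := by rw [ENNReal.tsum_add, p.tsum_coe, q.tsum_coe]
    _ = 2 := one_add_one_eq_two

lemma eD_ne_top {α : Type} (p q : PMF α) : eD p q ≠ ∞ :=
  (lt_of_le_of_lt (eD_le_two p q) (by norm_num)).ne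

lemma eD_self {α : Type} (p : PMF α) : eD p p = 0 := by
  simp [eD]

lemma statDist_eq_eD {α : Type} (p q : PMF α) : statDist p q = (eD p q).toReal := by
  rw [eD, ENNReal.tsum_toReal_eq fun a => ?_, statDist]
  · refine tsum_congr fun x => ?_
    have hp : p x ≠ ∞ := p.apply_ne_top x
    have hq : q x ≠ ∞ := q.apply_ne_top x
    rcases le_total (p x) (q x) with h | h
    · rw [tsub_eq_zero_of_le h, zero_add, ENNReal.toReal_sub_of_le h hq,
        abs_of_nonpos (by simp [ENNReal.toReal_le_toReal hp hq, h])]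
      ring
    · rw [tsub_eq_zero_of_le h, add_zero, ENNReal.toReal_sub_of_le h hp,
        abs_of_nonneg (by simp [ENNReal.toReal_le_toReal hq hp, h])]
  · exact (lt_of_le_of_lt (add_le_add (le_trans tsub_le_self (p.coe_le_one a))
      (le_trans tsub_le_self (q.coe_le_one a))) (by norm_num)).ne

lemma tsum_sub_tsum_le {α : Type} (f g : α → ℝ≥0∞) :
    (∑' a, f a) - (∑' a, g a) ≤ ∑' a, (f a - g a) := by
  rw [tsub_le_iff_right, ← ENNReal.tsum_add]
  exact ENNReal.tsum_le_tsum fun a => le_tsub_add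

open scoped Classical in
lemma eD_map_le {α β : Type} (p q : PMF α) (f : α → β) :
    eD (p.map f) (q.map f) ≤ eD p q := by
  have key : ∀ b, ((p.map f) b - (q.map f) b) + ((q.map f) b - (p.map f) b)
      ≤ ∑' a, if b = f a then ((p a - q a) + (q a - p a)) else 0 := by
    intro b
    rw [PMF.map_apply, PMF.map_apply]
    refine le_trans (add_le_add (tsum_sub_tsum_le _ _) (tsum_sub_tsum_le _ _)) ?_
    rw [← ENNReal.tsum_add]
    refine ENNReal.tsum_le_tsum fun a => ?_
    by_cases h : b = f a <;> simp [h]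
  calc eD (p.map f) (q.map f)
      ≤ ∑' b, ∑' a, if b = f a then ((p a - q a) + (q a - p a)) else 0 :=
        ENNReal.tsum_le_tsum key
    _ = ∑' a, ∑' b, if b = f a then ((p a - q a) + (q a - p a)) else 0 :=
        ENNReal.tsum_comm
    _ = eD p q := tsum_congr fun a => tsum_ite_eq (f a) _

lemma consBind_apply_nil {α : Type} (p : PMF α) (r : PMF (List α)) :
    (p.bind fun x => r.map (x :: ·)) [] = 0 := by
  rw [PMF.bind_apply]
  simp [PMF.map_apply]

open scoped Classical in
lemma consBind_apply_cons {α : Type} (p : PMF α) (r : PMF (List α)) (y : α) (ys : List α) :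
    (p.bind fun x => r.map (x :: ·)) (y :: ys) = p y * r ys := by
  rw [PMF.bind_apply]
  have hmap : ∀ x, (r.map (x :: ·)) (y :: ys) = if y = x then r ys else 0 := by
    intro x
    rw [PMF.map_apply]
    refine (tsum_eq_single ys ?_).trans ?_
    · intro xs hxs
      simp only [List.cons.injEq]
      exact if_neg fun h => hxs h.2.symm
    · by_cases h : y = x <;> simp [h]
  simp only [hmap]
  refine (tsum_eq_single y ?_).trans (by simp)
  intro x hx
  simp [Ne.symm hx]

lemma mul_sub_mul_le {a b c d : ℝ≥0∞} : a * c - b * d ≤ (a - b) * c + b * (c - d) := by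
  rw [tsub_le_iff_right]
  calc a * c ≤ ((a - b) + b) * c := mul_le_mul' le_tsub_add le_rfl
    _ = (a - b) * c + b * c := by ring
    _ ≤ (a - b) * c + b * ((c - d) + d) := by
        exact add_le_add le_rfl (mul_le_mul' (le_refl b) le_tsub_add)
    _ = (a - b) * c + b * (c - d) + b * d := by ring

lemma eD_cons_le {α : Type} (p q : PMF α) (r s : PMF (List α)) :
    eD (p.bind fun x => r.map (x :: ·)) (q.bind fun x => s.map (x :: ·))
      ≤ eD p q + eD r s := by
  set A := p.bind fun x => r.map (x :: ·) with hA
  set B := q.bind fun x => s.map (x :: ·) with hB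
  have hinj : Function.Injective (fun z : α × List α => z.1 :: z.2) := by
    rintro ⟨a, as⟩ ⟨b, bs⟩ h
    simpa [Prod.ext_iff] using h
  have hrange : ∀ l : List α, (l ∉ Set.range fun z : α × List α => z.1 :: z.2) → l = [] := by
    rintro (_ | ⟨y, ys⟩) h
    · rfl
    · exact absurd ⟨(y, ys), rfl⟩ h
  have heq : eD A B = ∑' z : α × List α,
      ((A (z.1 :: z.2) - B (z.1 :: z.2)) + (B (z.1 :: z.2) - A (z.1 :: z.2))) := by
    refine (hinj.tsum_eq ?_).symm
    intro l hl
    rw [Function.mem_support] at hl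
    rcases l with _ | ⟨y, ys⟩
    · exact absurd (by rw [consBind_apply_nil, consBind_apply_nil]; simp) hl
    · exact ⟨(y, ys), rfl⟩
  rw [heq]
  have step : ∀ z : α × List α,
      ((A (z.1 :: z.2) - B (z.1 :: z.2)) + (B (z.1 :: z.2) - A (z.1 :: z.2)))
      ≤ ((p z.1 - q z.1) * r z.2 + q z.1 * (r z.2 - s z.2))
        + ((q z.1 - p z.1) * s z.2 + p z.1 * (s z.2 - r z.2)) := by
    intro z
    rw [consBind_apply_cons, consBind_apply_cons]
    exact add_le_add mul_sub_mul_le mul_sub_mul_le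
  refine le_trans (ENNReal.tsum_le_tsum step) ?_
  rw [ENNReal.tsum_add, ENNReal.tsum_add, ENNReal.tsum_add]
  have e1 : ∑' z : α × List α, (p z.1 - q z.1) * r z.2 = ∑' x, (p x - q x) := by
    rw [ENNReal.tsum_prod']
    refine tsum_congr fun x => ?_
    show ∑' b, (p x - q x) * r b = _
    rw [ENNReal.tsum_mul_left, r.tsum_coe, mul_one]
  have e2 : ∑' z : α × List α, q z.1 * (r z.2 - s z.2) = ∑' x, (r x - s x) := by
    rw [ENNReal.tsum_prod', ENNReal.tsum_comm]
    refine tsum_congr fun xs => ?_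
    show ∑' a, q a * (r xs - s xs) = _
    rw [ENNReal.tsum_mul_right, q.tsum_coe, one_mul]
  have e3 : ∑' z : α × List α, (q z.1 - p z.1) * s z.2 = ∑' x, (q x - p x) := by
    rw [ENNReal.tsum_prod']
    refine tsum_congr fun x => ?_
    show ∑' b, (q x - p x) * s b = _
    rw [ENNReal.tsum_mul_left, s.tsum_coe, mul_one]
  have e4 : ∑' z : α × List α, p z.1 * (s z.2 - r z.2) = ∑' x, (s x - r x) := by
    rw [ENNReal.tsum_prod', ENNReal.tsum_comm]
    refine tsum_congr fun xs => ?_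
    show ∑' a, p a * (s xs - r xs) = _
    rw [ENNReal.tsum_mul_right, p.tsum_coe, one_mul]
  rw [e1, e2, e3, e4, eD, eD, ENNReal.tsum_add, ENNReal.tsum_add]
  ring_nf
  exact le_refl _

/-- position-indexed entrywise map on lists -/
def listT {α : Type} (t : ℕ → α → α) : ℕ → List α → List α
  | _, [] => []
  | j, x :: xs => t j x :: listT t (j + 1) xs

lemma pmfList_map_listT {α : Type} (t : ℕ → α → α) :
    ∀ (ps : List (PMF α)) (j : ℕ),
      (pmfList ps).map (listT t j)
        = pmfList (ps.mapIdx fun i p => p.map (t (j + i)))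
  | [], j => by simp [pmfList, listT, PMF.pure_map]
  | p :: ps, j => by
    have ih := pmfList_map_listT t ps (j + 1)
    simp only [pmfList, List.mapIdx_cons]
    rw [PMF.map_bind]
    have hmapIdx : (List.mapIdx (fun i q => q.map (t (j + 1 + i))) ps)
        = List.mapIdx (fun i q => q.map (t (j + (i + 1)))) ps := by
      have h : ∀ i : ℕ, j + 1 + i = j + (i + 1) := fun i => by omega
      simp only [h]
    rw [← hmapIdx, ← ih, PMF.bind_map]
    refine congrArg p.bind (funext fun x => ?_)
    simp only [Function.comp_apply]
    rw [PMF.map_comp, PMF.map_comp]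
    congr 1

lemma eD_pmfList_le {α : Type} :
    ∀ (ps qs : List (PMF α)) (δ : ℕ → ℝ≥0∞), ps.length = qs.length →
    (∀ (m : ℕ) (hm : m < ps.length) (hm' : m < qs.length), eD ps[m] qs[m] ≤ δ m) →
    eD (pmfList ps) (pmfList qs) ≤ ∑ m ∈ Finset.range ps.length, δ m
  | [], [], δ, _, _ => by simp [pmfList, eD_self]
  | [], q :: qs, δ, h, _ => by simp at h
  | p :: ps, [], δ, h, _ => by simp at h
  | p :: ps, q :: qs, δ, h, hpt => by
    have ih := eD_pmfList_le ps qs (fun m => δ (m + 1))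
      (by simpa using h) (fun m hm hm' => by
        exact hpt (m + 1) (by simpa using hm) (by simpa using hm'))
    calc eD (pmfList (p :: ps)) (pmfList (q :: qs))
        ≤ eD p q + eD (pmfList ps) (pmfList qs) := eD_cons_le p q _ _
      _ ≤ δ 0 + ∑ m ∈ Finset.range ps.length, δ (m + 1) :=
          add_le_add (hpt 0 (by simp) (by simp)) ih
      _ = ∑ m ∈ Finset.range (p :: ps).length, δ m := by
          rw [List.length_cons, Finset.sum_range_succ', add_comm]

/-- The selective-opening view `CD_k(M, I)` of the composed scheme: the joint
distribution of the vector commitment `c` together with the openings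
`(cᵢ, dᵢ, Open_VC(k₂, D', i))` at all positions `i ∈ I`. -/
noncomputable def selectiveOpeningView
    {Msg C D CC DD O : Type} [Inhabited C] [Inhabited D]
    (comCommit : Msg → PMF (C × D))
    (vcCommit : List C → CC × DD) (vcOpen : DD → ℕ → O)
    (M : List Msg) (I : Finset ℕ) :
    PMF (CC × (ℕ → Option ((C × D) × O))) :=
  (pmfList (M.map comCommit)).map fun cds =>
    ((vcCommit (cds.map Prod.fst)).1,
      fun i =>
        if i ∈ I then
          some (cds.getD (i - 1) default, vcOpen (vcCommit (cds.map Prod.fst)).2 i)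
        else none)

/-- **Hybrid decomposition (proof of Theorem 4).**
For all `n ≤ L`, all `I ⊆ {1, …, n}`, all message vectors `M₁, M₂` of length
`n` with `(M₁)_I = (M₂)_I`, and every key `k = (k₁, k₂)`, the selective-opening
views satisfy the refined bound
`Δ(CD_k(M₁, I), CD_k(M₂, I)) ≤ Σ_{i ∈ {1,…,n} \ I} Δ(C_{k₁}((M₁)ᵢ), C_{k₁}((M₂)ᵢ))`. -/
theorem selective_opening_hybrid_decomposition
    {K₁ K₂ Msg C D CC DD O : Type} [Inhabited Msg] [Inhabited C] [Inhabited D]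
    (comCommit : K₁ → Msg → PMF (C × D))
    (L : ℕ) (vcCommit : K₂ → List C → CC × DD) (vcOpen : K₂ → DD → ℕ → O)
    (n : ℕ) (hn : n ≤ L) (I : Finset ℕ) (hI : I ⊆ Finset.Icc 1 n)
    (M₁ M₂ : List Msg) (hM₁ : M₁.length = n) (hM₂ : M₂.length = n)
    (hMI : ∀ i ∈ I, M₁.getD (i - 1) default = M₂.getD (i - 1) default)
    (k₁ : K₁) (k₂ : K₂) :
    statDist
      (selectiveOpeningView (comCommit k₁) (vcCommit k₂) (vcOpen k₂) M₁ I)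
      (selectiveOpeningView (comCommit k₁) (vcCommit k₂) (vcOpen k₂) M₂ I)
    ≤ ∑ i ∈ Finset.Icc 1 n \ I,
        statDist ((comCommit k₁ (M₁.getD (i - 1) default)).map Prod.fst)
          ((comCommit k₁ (M₂.getD (i - 1) default)).map Prod.fst) := by
  classical
  set com := comCommit k₁ with hcom
  set t : ℕ → (C × D) → (C × D) :=
    fun j cd => if j + 1 ∈ I then cd else (cd.1, default) with ht
  set F : List (C × D) → CC × (ℕ → Option ((C × D) × O)) := fun cds =>
    ((vcCommit k₂ (cds.map Prod.fst)).1,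
      fun i =>
        if i ∈ I then
          some (cds.getD (i - 1) default, vcOpen k₂ (vcCommit k₂ (cds.map Prod.fst)).2 i)
        else none) with hF
  -- listT preserves the list of first components
  have hfst : ∀ (j : ℕ) (xs : List (C × D)),
      (listT t j xs).map Prod.fst = xs.map Prod.fst := by
    intro j xs
    induction xs generalizing j with
    | nil => rfl
    | cons x xs ih =>
      simp only [listT, List.map_cons, ih]
      congr 1
      by_cases h : j + 1 ∈ I <;> simp [ht, h]
  -- listT preserves entries at opened positions
  have hget : ∀ (xs : List (C × D)) (j m : ℕ), j + m + 1 ∈ I →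
      (listT t j xs).getD m default = xs.getD m default := by
    intro xs
    induction xs with
    | nil => intro j m _; rfl
    | cons x xs ih =>
      intro j m hm
      cases m with
      | zero =>
        have hj : j + 1 ∈ I := by simpa using hm
        simp [listT, ht, hj]
      | succ m =>
        simp only [listT, List.getD_cons_succ]
        have h' : j + 1 + m + 1 ∈ I := by
          have heq : j + 1 + m + 1 = j + (m + 1) + 1 := by omega
          rw [heq]; exact hm
        exact ih (j + 1) m h'
  have hFT : ∀ xs : List (C × D), F (listT t 0 xs) = F xs := by
    intro xs
    simp only [hF, hfst 0 xs]
    refine congrArg _ ?_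
    funext i
    by_cases hi : i ∈ I
    · simp only [hi, if_pos]
      have h1 : 1 ≤ i := (Finset.mem_Icc.mp (hI hi)).1
      have h0 : 0 + (i - 1) + 1 = i := by omega
      rw [hget xs 0 (i - 1) (by rw [h0]; exact hi)]
    · simp [hi]
  have hview : ∀ M : List Msg,
      selectiveOpeningView com (vcCommit k₂) (vcOpen k₂) M I
        = (pmfList ((M.map com).mapIdx fun i p => p.map (t i))).map F := by
    intro M
    have hpm := pmfList_map_listT t (M.map com) 0
    simp only [Nat.zero_add] at hpm
    rw [← hpm, PMF.map_comp]
    unfold selectiveOpeningView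
    exact congrFun (congrArg PMF.map (funext fun xs => (hFT xs).symm))
      (pmfList (M.map com))
  set δ : ℕ → ℝ≥0∞ := fun m =>
    if m + 1 ∈ I then 0 else
      eD ((com (M₁.getD m default)).map Prod.fst)
        ((com (M₂.getD m default)).map Prod.fst) with hδ
  set A := (M₁.map com).mapIdx fun i p => p.map (t i) with hA
  set B := (M₂.map com).mapIdx fun i p => p.map (t i) with hB
  have hAlen : A.length = n := by simp [hA, hM₁]
  have hBlen : B.length = n := by simp [hB, hM₂]
  -- pointwise bound
  have hentry : ∀ (M : List Msg) (hM : M.length = n) (m : ℕ) (hm : m < n),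
      ((M.map com).mapIdx fun i p => p.map (t i))[m]'(by simp [hM, hm])
        = (com (M.getD m default)).map (t m) := by
    intro M hM m hm
    have hm1 : m < (M.map com).length := by simp [hM, hm]
    have h := List.getElem_mapIdx (l := M.map com) (f := fun i p => p.map (t i)) (i := m) (h := by simpa using hm1)
    simp only [List.get_eq_getElem, List.getElem_map] at h
    rw [h, List.getD_eq_getElem M default (by omega)]
  have hpt : ∀ (m : ℕ) (hm : m < A.length) (hm' : m < B.length),
      eD A[m] B[m] ≤ δ m := by
    intro m hm hm'
    have hmn : m < n := by rwa [hAlen] at hm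
    have eA : A[m] = (com (M₁.getD m default)).map (t m) :=
      hentry M₁ hM₁ m hmn
    have eB : B[m] = (com (M₂.getD m default)).map (t m) :=
      hentry M₂ hM₂ m hmn
    by_cases hmI : m + 1 ∈ I
    · have htid : t m = id := by funext cd; simp [ht, hmI]
      have hMeq : M₁.getD m default = M₂.getD m default := by
        have := hMI (m + 1) hmI
        simpa using this
      rw [eA, eB, htid, PMF.map_id, PMF.map_id, hMeq, hδ]
      simp [hmI, eD_self]
    · have htm : t m = (fun c : C => (c, (default : D))) ∘ Prod.fst := by
        funext cd; simp [ht, hmI]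
      rw [eA, eB, htm, ← PMF.map_comp, ← PMF.map_comp, hδ]
      simp only [hmI, if_false]
      exact eD_map_le _ _ _
  -- the ENNReal-level bound
  have main : eD (selectiveOpeningView com (vcCommit k₂) (vcOpen k₂) M₁ I)
      (selectiveOpeningView com (vcCommit k₂) (vcOpen k₂) M₂ I)
      ≤ ∑ i ∈ Finset.Icc 1 n \ I,
          eD ((com (M₁.getD (i - 1) default)).map Prod.fst)
            ((com (M₂.getD (i - 1) default)).map Prod.fst) := by
    rw [hview M₁, hview M₂]
    refine le_trans (eD_map_le _ _ F) ?_
    refine le_trans (eD_pmfList_le A B δ (by rw [hAlen, hBlen]) hpt) ?_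
    rw [hAlen]
    have hsum : ∑ i ∈ Finset.Icc 1 n \ I,
        eD ((com (M₁.getD (i - 1) default)).map Prod.fst)
          ((com (M₂.getD (i - 1) default)).map Prod.fst)
        = ∑ i ∈ Finset.Icc 1 n,
            if i ∈ I then 0 else
              eD ((com (M₁.getD (i - 1) default)).map Prod.fst)
                ((com (M₂.getD (i - 1) default)).map Prod.fst) := by
      rw [Finset.sdiff_eq_filter, Finset.sum_filter]
      exact Finset.sum_congr rfl fun i _ => by by_cases hi : i ∈ I <;> simp [hi]
    rw [hsum, ← Finset.Ico_add_one_right_eq_Icc, Finset.sum_Ico_eq_sum_range,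
      show n + 1 - 1 = n from rfl]
    refine le_of_eq (Finset.sum_congr rfl fun m _ => ?_)
    have h1 : 1 + m = m + 1 := by omega
    have h2 : 1 + m - 1 = m := by omega
    rw [hδ]
    simp [h1, h2]
  -- pass to the reals
  simp only [statDist_eq_eD, hcom]
  rw [← ENNReal.toReal_sum (fun i _ => eD_ne_top _ _)]
  exact ENNReal.toReal_mono
    (ENNReal.sum_ne_top.mpr fun i _ => eD_ne_top _ _) main
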